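/- The infinite-horizon cost under the nominal control is uniformly bounded on Π: for every initial condition (S₀,E₀,I₀) ∈ Π, J_∞ = ∫₀^∞ (E(t)² + I(t)²) dt ≤ 2/η + 1/γ_nom < ∞, where (E,I) is the solution of the SEIR system with constant controls β ≡ β_nom, γ ≡ γ_nom. -/

import Mathlib

open Set MeasureTheory

/-- The infinite-horizon nominal cost is bounded by 2/η + 1/γ_nom. -/
theorem seir_nominal_cost_bounded
    (η βnom γnom : ℝ)
    (hη : 0 < η) (hβnom : 0 < βnom) (hγnom : 0 < γnom)
    (S E I : ℝ → ℝ)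
    (hS : ∀ t, 0 ≤ t → HasDerivAt S (-βnom * S t * I t) t)
    (hE : ∀ t, 0 ≤ t → HasDerivAt E (βnom * S t * I t - η * E t) t)
    (hI : ∀ t, 0 ≤ t → HasDerivAt I (η * E t - γnom * I t) t)
    (hmem : ∀ t, 0 ≤ t → S t ∈ Icc (0:ℝ) 1 ∧ E t ∈ Icc (0:ℝ) 1 ∧
      I t ∈ Icc (0:ℝ) 1 ∧ S t + E t + I t ≤ 1) :
    IntegrableOn (fun t => (E t) ^ 2 + (I t) ^ 2) (Ioi 0) ∧
      (∫ t in Ioi (0:ℝ), ((E t) ^ 2 + (I t) ^ 2)) ≤ 2 / η + 1 / γnom := by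
  have hcS : ContinuousOn S (Ici 0) := fun t ht => (hS t ht).continuousAt.continuousWithinAt
  have hcE : ContinuousOn E (Ici 0) := fun t ht => (hE t ht).continuousAt.continuousWithinAt
  have hcI : ContinuousOn I (Ici 0) := fun t ht => (hI t ht).continuousAt.continuousWithinAt
  set f : ℝ → ℝ := fun t => E t ^ 2 + I t ^ 2 with hf
  have hcf : ContinuousOn f (Ici 0) := (hcE.pow 2).add (hcI.pow 2)
  have hfi : ∀ b : ℝ, IntegrableOn f (Ioc 0 b) := by
    intro b
    rcases le_or_gt b 0 with hb | hb
    · simp [Ioc_eq_empty_of_le hb]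
    · exact ((hcf.mono Icc_subset_Ici_self).integrableOn_Icc).mono_set Ioc_subset_Icc_self
  have hfnn : ∀ t, 0 ≤ t → 0 ≤ f t := by
    intro t ht
    have := sq_nonneg (E t); have := sq_nonneg (I t)
    simp only [hf]; positivity
  have key : ∀ b : ℝ, 0 ≤ b → ∫ t in (0:ℝ)..b, f t ≤ 2 / η + 1 / γnom := by
    intro b hb
    have hIccIci : Icc (0:ℝ) b ⊆ Ici 0 := Icc_subset_Ici_self
    have hEi : IntervalIntegrable E volume 0 b := by
      apply ContinuousOn.intervalIntegrable
      rw [uIcc_of_le hb]; exact hcE.mono hIccIci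
    have hIi : IntervalIntegrable I volume 0 b := by
      apply ContinuousOn.intervalIntegrable
      rw [uIcc_of_le hb]; exact hcI.mono hIccIci
    have hfii : IntervalIntegrable f volume 0 b := by
      apply ContinuousOn.intervalIntegrable
      rw [uIcc_of_le hb]; exact hcf.mono hIccIci
    have h0 := hmem 0 le_rfl
    have hbm := hmem b hb
    -- ∫ E ≤ 1/η
    have hEbound : ∫ t in (0:ℝ)..b, E t ≤ 1 / η := by
      have hderiv : ∀ t ∈ uIcc (0:ℝ) b,
          HasDerivAt (fun u => -(S u + E u)) (η * E t) t := by
        intro t ht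
        rw [uIcc_of_le hb] at ht
        have h1 := ((hS t ht.1).add (hE t ht.1)).neg
        exact h1.congr_deriv (by ring)
      have heq := intervalIntegral.integral_eq_sub_of_hasDerivAt hderiv (hEi.const_mul η)
      rw [intervalIntegral.integral_const_mul] at heq
      have hle : η * ∫ t in (0:ℝ)..b, E t ≤ 1 := by
        rw [heq]
        nlinarith [h0.2.2.2, h0.2.2.1.1, hbm.1.1, hbm.2.1.1]
      exact (le_div_iff₀' hη).mpr hle
    -- ∫ I ≤ 1/γ
    have hIbound : ∫ t in (0:ℝ)..b, I t ≤ 1 / γnom := by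
      have hderiv : ∀ t ∈ uIcc (0:ℝ) b,
          HasDerivAt (fun u => -(S u + E u + I u)) (γnom * I t) t := by
        intro t ht
        rw [uIcc_of_le hb] at ht
        have h1 := (((hS t ht.1).add (hE t ht.1)).add (hI t ht.1)).neg
        exact h1.congr_deriv (by ring)
      have heq := intervalIntegral.integral_eq_sub_of_hasDerivAt hderiv (hIi.const_mul γnom)
      rw [intervalIntegral.integral_const_mul] at heq
      have hle : γnom * ∫ t in (0:ℝ)..b, I t ≤ 1 := by
        rw [heq]
        nlinarith [h0.2.2.2, hbm.1.1, hbm.2.1.1, hbm.2.2.1.1]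
      exact (le_div_iff₀' hγnom).mpr hle
    -- pointwise f ≤ E + I on [0,b]
    have hptwise : ∀ t ∈ Icc (0:ℝ) b, f t ≤ E t + I t := by
      intro t ht
      have hEt := (hmem t ht.1).2.1
      have hIt := (hmem t ht.1).2.2.1
      have h1 : E t ^ 2 ≤ E t := by nlinarith [hEt.1, hEt.2]
      have h2 : I t ^ 2 ≤ I t := by nlinarith [hIt.1, hIt.2]
      simp only [hf]; linarith
    have hmono : ∫ t in (0:ℝ)..b, f t ≤ ∫ t in (0:ℝ)..b, (E t + I t) :=
      intervalIntegral.integral_mono_on hb hfii (hEi.add hIi) hptwise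
    rw [intervalIntegral.integral_add hEi hIi] at hmono
    have h2η : 1 / η ≤ 2 / η := by
      gcongr; norm_num
    calc ∫ t in (0:ℝ)..b, f t ≤ (∫ t in (0:ℝ)..b, E t) + ∫ t in (0:ℝ)..b, I t := hmono
      _ ≤ 1 / η + 1 / γnom := add_le_add hEbound hIbound
      _ ≤ 2 / η + 1 / γnom := by linarith
  -- integrability on Ioi 0
  have hnorm : ∀ b : ℝ, 0 ≤ b → (∫ t in (0:ℝ)..b, ‖f t‖) ≤ 2 / η + 1 / γnom := by
    intro b hb
    have : ∀ t ∈ Icc (0:ℝ) b, ‖f t‖ = f t := fun t ht => abs_of_nonneg (hfnn t ht.1)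
    rw [intervalIntegral.integral_congr (g := f) ?_]
    · exact key b hb
    · intro t ht; rw [uIcc_of_le hb] at ht; exact this t ht
  have hInt : IntegrableOn f (Ioi 0) := by
    refine integrableOn_Ioi_of_intervalIntegral_norm_bounded (2 / η + 1 / γnom) 0
      (fun i => hfi i) Filter.tendsto_id ?_
    filter_upwards [Filter.eventually_ge_atTop (0:ℝ)] with b hb
    exact hnorm b hb
  refine ⟨hInt, ?_⟩
  have htend := intervalIntegral_tendsto_integral_Ioi 0 hInt Filter.tendsto_id
  refine le_of_tendsto htend ?_
  filter_upwards [Filter.eventually_ge_atTop (0:ℝ)] with b hb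
  exact key b hb
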